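/- Let {C_0, ..., C_d} be a d-critical family in R^d, and for each j let p_j be the (unique) point of ∩_{i≠j} C_i nearest to C_j. Then p_0, ..., p_d are affinely independent, so their convex hull is a d-simplex. -/

import Mathlib

/-- The nearest points p_j of the partial intersections to C_j are affinely
independent, so their convex hull is a d-simplex. -/
theorem nearest_points_affineIndependent (d : ℕ)
    (C : Fin (d + 1) → Set (EuclideanSpace ℝ (Fin d)))
    (hcomp : ∀ i, IsCompact (C i)) (hconv : ∀ i, Convex ℝ (C i))
    (hcrit : ∀ j, (⋂ i ∈ {i : Fin (d + 1) | i ≠ j}, C i).Nonempty)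
    (hempty : (⋂ i, C i) = ∅)
    (p : Fin (d + 1) → EuclideanSpace ℝ (Fin d))
    (hp : ∀ j, p j ∈ (⋂ i ∈ {i : Fin (d + 1) | i ≠ j}, C i) ∧
      ∀ q ∈ (⋂ i ∈ {i : Fin (d + 1) | i ≠ j}, C i),
        Metric.infDist (p j) (C j) ≤ Metric.infDist q (C j)) :
    AffineIndependent ℝ p := by
  classical
  -- each p j lies in C i for i ≠ j
  have hpmem : ∀ j i, i ≠ j → p j ∈ C i := by
    intro j i hij
    have := (hp j).1
    simp only [Set.mem_iInter] at this
    exact this i hij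
  rcases Nat.eq_zero_or_pos d with hd | hd
  · subst hd
    have : Subsingleton (Fin (0 + 1)) := Fin.subsingleton_one
    exact affineIndependent_of_subsingleton ℝ p
  by_contra hind
  -- the vector span of the points has small rank
  set V : Submodule ℝ (EuclideanSpace ℝ (Fin d)) := vectorSpan ℝ (Set.range p) with hV
  have hrank : Module.finrank ℝ V ≤ d - 1 := by
    rw [hV, finrank_vectorSpan_le_iff_not_affineIndependent ℝ p
      (by simp [Fintype.card_fin]; omega)]
    exact hind
  -- the affine map from V into X sending v to p 0 + v
  let f : V →ᵃ[ℝ] EuclideanSpace ℝ (Fin d) :=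
    (AffineEquiv.constVAdd ℝ (EuclideanSpace ℝ (Fin d)) (p 0)).toAffineMap.comp V.subtype.toAffineMap
  have hf : ∀ v : V, f v = p 0 + (v : EuclideanSpace ℝ (Fin d)) := by
    intro v
    rfl
  -- apply Helly's theorem in V to the preimages of C i
  have hhelly : (⋂ i ∈ (Finset.univ : Finset (Fin (d + 1))), f ⁻¹' (C i)).Nonempty := by
    apply Convex.helly_theorem' (𝕜 := ℝ)
    · intro i _
      exact (hconv i).affine_preimage f
    · intro I _ hIcard
      -- I has at most d elements, so some j is missing
      have hcard : I.card < Fintype.card (Fin (d + 1)) := by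
        have : Module.finrank ℝ V + 1 ≤ d := by omega
        simp only [Fintype.card_fin]
        omega
      have hcompl : (Iᶜ : Finset (Fin (d + 1))).Nonempty := by
        rw [← Finset.card_pos, Finset.card_compl]
        omega
      obtain ⟨j, hj'⟩ := hcompl
      have hj : j ∉ I := Finset.mem_compl.mp hj'
      have hmem : p j - p 0 ∈ V := by
        have := vsub_mem_vectorSpan ℝ (Set.mem_range_self (f := p) j)
          (Set.mem_range_self (f := p) 0)
        simpa [vsub_eq_sub] using this
      refine ⟨⟨p j - p 0, hmem⟩, ?_⟩
      simp only [Set.mem_iInter, Set.mem_preimage]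
      intro i hi
      have hfv : f ⟨p j - p 0, hmem⟩ = p j := by rw [hf]; module
      rw [hfv]
      exact hpmem j i (fun h => hj (h ▸ hi))
  obtain ⟨v, hv⟩ := hhelly
  simp only [Set.mem_iInter, Set.mem_preimage, Finset.mem_univ, forall_const] at hv
  have : f v ∈ ⋂ i, C i := Set.mem_iInter.mpr hv
  rw [hempty] at this
  exact this
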